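/- Let f : ℝ → (n×n real matrices → n×n real matrices) be a time-dependent vector field and let φ : ℝ → (G → G) be its transition flow, i.e., φ_0(X) = X for all X ∈ G, and for every X ∈ G the curve t ↦ φ_t(X) is differentiable with derivative f_t(φ_t(X)) at every t ≥ 0. If the flow is a group homomorphism at each time, i.e., φ_t(XY) = φ_t(X)·φ_t(Y) for all X, Y ∈ G and t ≥ 0, then f_0 satisfies the linear group property on G: f_0(XY) = f_0(X)·Y + X·f_0(Y) for all X, Y ∈ G. (Proposition 1, implication (ii) ⟹ (i).) -/

import Mathlib

open NormedSpace

attribute [local instance] Matrix.normedAddCommGroup Matrix.normedSpace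

/-- `f` satisfies the linear group property on `G`:
`f (X*Y) = f X * Y + X * f Y` for all `X, Y ∈ G`. -/
def LinearGroupProp {n : ℕ} (G : Set (Matrix (Fin n) (Fin n) ℝ))
    (f : Matrix (Fin n) (Fin n) ℝ → Matrix (Fin n) (Fin n) ℝ) : Prop :=
  ∀ X ∈ G, ∀ Y ∈ G, f (X * Y) = f X * Y + X * f Y

/-- `f` satisfies the affine group property on `G`:
`f (X*Y) = f X * Y + X * f Y - X * f 1 * Y` for all `X, Y ∈ G`. -/
def AffineGroupProp {n : ℕ} (G : Set (Matrix (Fin n) (Fin n) ℝ))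
    (f : Matrix (Fin n) (Fin n) ℝ → Matrix (Fin n) (Fin n) ℝ) : Prop :=
  ∀ X ∈ G, ∀ Y ∈ G, f (X * Y) = f X * Y + X * f Y - X * f 1 * Y

/-- `G` is a matrix Lie group: a closed subgroup of the group of invertible `n × n`
real matrices. -/
structure IsMatrixLieGroup {n : ℕ} (G : Set (Matrix (Fin n) (Fin n) ℝ)) : Prop where
  one_mem : (1 : Matrix (Fin n) (Fin n) ℝ) ∈ G
  mul_mem : ∀ {X Y : Matrix (Fin n) (Fin n) ℝ}, X ∈ G → Y ∈ G → X * Y ∈ G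
  isUnit : ∀ {X : Matrix (Fin n) (Fin n) ℝ}, X ∈ G → IsUnit X
  inv_mem : ∀ {X : Matrix (Fin n) (Fin n) ℝ}, X ∈ G → X⁻¹ ∈ G
  closed : IsClosed {A : {M : Matrix (Fin n) (Fin n) ℝ // IsUnit M} |
    (A : Matrix (Fin n) (Fin n) ℝ) ∈ G}

/-- The Lie algebra of the matrix Lie group `G`. -/
def lieAlgebraOf {n : ℕ} (G : Set (Matrix (Fin n) (Fin n) ℝ)) :
    Set (Matrix (Fin n) (Fin n) ℝ) :=
  {x | ∀ t : ℝ, exp (t • x) ∈ G}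


/-- Matrix multiplication as a continuous bilinear map (finite dimensions). -/
noncomputable def mulCLM (n : ℕ) :
    Matrix (Fin n) (Fin n) ℝ →L[ℝ] Matrix (Fin n) (Fin n) ℝ →L[ℝ] Matrix (Fin n) (Fin n) ℝ :=
  LinearMap.toContinuousLinearMap
    { toFun := fun A => LinearMap.toContinuousLinearMap (LinearMap.mulLeft ℝ A)
      map_add' := by intro A B; ext C; simp [add_mul]
      map_smul' := by intro c A; ext C; simp [smul_mul_assoc] }

@[simp] lemma mulCLM_apply {n : ℕ} (A B : Matrix (Fin n) (Fin n) ℝ) :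
    mulCLM n A B = A * B := rfl

/-- **Proposition 1, (ii) ⟹ (i).** If the transition flow `φ` of the time-dependent
vector field `f` on `G` is a group homomorphism at each time `t ≥ 0`, then `f 0`
satisfies the linear group property on `G`. -/
theorem linearGroupProp_of_flow_hom {n : ℕ} (hn : 0 < n)
    (G : Set (Matrix (Fin n) (Fin n) ℝ)) (hG : IsMatrixLieGroup G)
    (f : ℝ → Matrix (Fin n) (Fin n) ℝ → Matrix (Fin n) (Fin n) ℝ)
    (φ : ℝ → Matrix (Fin n) (Fin n) ℝ → Matrix (Fin n) (Fin n) ℝ)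
    (hφ_mem : ∀ t : ℝ, 0 ≤ t → ∀ X ∈ G, φ t X ∈ G)
    (hφ_zero : ∀ X ∈ G, φ 0 X = X)
    (hφ_deriv : ∀ X ∈ G, ∀ t : ℝ, 0 ≤ t → HasDerivAt (fun s => φ s X) (f t (φ t X)) t)
    (hφ_hom : ∀ t : ℝ, 0 ≤ t → ∀ X ∈ G, ∀ Y ∈ G, φ t (X * Y) = φ t X * φ t Y) :
    LinearGroupProp G (f 0) := by
  intro X hX Y hY
  have hXY : X * Y ∈ G := hG.mul_mem hX hY
  have h1 : HasDerivAt (fun s => φ s (X * Y)) (f 0 (X * Y)) 0 := by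
    have h := hφ_deriv (X * Y) hXY 0 le_rfl
    rwa [hφ_zero _ hXY] at h
  have hX0 : HasDerivAt (fun s => φ s X) (f 0 X) 0 := by
    have h := hφ_deriv X hX 0 le_rfl; rwa [hφ_zero X hX] at h
  have hY0 : HasDerivAt (fun s => φ s Y) (f 0 Y) 0 := by
    have h := hφ_deriv Y hY 0 le_rfl; rwa [hφ_zero Y hY] at h
  have h2 : HasDerivAt (fun s => φ s X * φ s Y) (f 0 X * Y + X * f 0 Y) 0 := by
    have h := (mulCLM n).hasDerivWithinAt_of_bilinear (s := Set.univ)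
      hX0.hasDerivWithinAt hY0.hasDerivWithinAt
    rw [hasDerivWithinAt_univ, add_comm, hφ_zero X hX, hφ_zero Y hY] at h
    exact h
  have w1 : HasDerivWithinAt (fun s => φ s (X * Y)) (f 0 (X * Y)) (Set.Ici 0) 0 :=
    h1.hasDerivWithinAt
  have w2 : HasDerivWithinAt (fun s => φ s (X * Y)) (f 0 X * Y + X * f 0 Y)
      (Set.Ici 0) 0 := by
    refine h2.hasDerivWithinAt.congr (fun t ht => ?_) ?_
    · exact hφ_hom t ht X hX Y hY
    · exact hφ_hom 0 le_rfl X hX Y hY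
  exact (uniqueDiffOn_Ici (0:ℝ) 0 Set.self_mem_Ici).eq_deriv _ w1 w2
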